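/- Let w : ℝ → (0,∞) be continuous with 1/w not Lebesgue-integrable on (−∞,0) and not Lebesgue-integrable on (0,∞); let p_w(ξ) = ∫₀^ξ w(ζ)⁻¹ dζ and μ_w(ξ,t) = p_w⁻¹(p_w(ξ)+t) − ξ. Then the restriction of μ_w to ℝ × [0,∞) is partially continuously differentiable with ∂μ_w/∂ξ(ξ,t) = w(ξ + μ_w(ξ,t))/w(ξ) − 1 and ∂μ_w/∂t(ξ,t) = w(ξ + μ_w(ξ,t)) for all ξ ∈ ℝ and t ≥ 0; both partial derivatives are continuous. -/

import Mathlib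

open MeasureTheory Filter Set Topology

/-- `p_w(ξ) = ∫₀^ξ w(ζ)⁻¹ dζ`. -/
noncomputable def pW (w : ℝ → ℝ) (ξ : ℝ) : ℝ := ∫ ζ in (0:ℝ)..ξ, (w ζ)⁻¹

/-- `μ_w(ξ,t) = p_w⁻¹(p_w(ξ) + t) − ξ`. -/
noncomputable def muW (w : ℝ → ℝ) (ξ t : ℝ) : ℝ :=
  Function.invFun (pW w) (pW w ξ + t) - ξ

theorem stmt_8 (w : ℝ → ℝ) (hw_cont : Continuous w) (hw_pos : ∀ ξ, 0 < w ξ)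
    (hni_neg : ¬ IntegrableOn (fun ζ => (w ζ)⁻¹) (Set.Iio 0))
    (hni_pos : ¬ IntegrableOn (fun ζ => (w ζ)⁻¹) (Set.Ioi 0)) :
    (∀ ξ t : ℝ, 0 ≤ t →
      HasDerivAt (fun a => muW w a t) (w (ξ + muW w ξ t) / w ξ - 1) ξ) ∧
    (∀ ξ t : ℝ, 0 ≤ t →
      HasDerivWithinAt (fun s => muW w ξ s) (w (ξ + muW w ξ t)) (Set.Ici 0) t) ∧
    ContinuousOn (fun q : ℝ × ℝ => w (q.1 + muW w q.1 q.2) / w q.1 - 1)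
      (Set.univ ×ˢ Set.Ici (0:ℝ)) ∧
    ContinuousOn (fun q : ℝ × ℝ => w (q.1 + muW w q.1 q.2))
      (Set.univ ×ˢ Set.Ici (0:ℝ)) := by
  have hwne : ∀ ξ, w ξ ≠ 0 := fun ξ => (hw_pos ξ).ne'
  have hwinv_cont : Continuous fun ζ => (w ζ)⁻¹ := hw_cont.inv₀ hwne
  have hint : ∀ a b : ℝ, IntervalIntegrable (fun ζ => (w ζ)⁻¹) volume a b :=
    fun a b => hwinv_cont.intervalIntegrable a b
  have hpderiv : ∀ ξ, HasDerivAt (pW w) (w ξ)⁻¹ ξ := fun ξ =>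
    intervalIntegral.integral_hasDerivAt_right (hint 0 ξ)
      (hwinv_cont.stronglyMeasurableAtFilter _ _) hwinv_cont.continuousAt
  have hmono : StrictMono (pW w) :=
    strictMono_of_hasDerivAt_pos hpderiv fun x => inv_pos.2 (hw_pos x)
  have hpcont : Continuous (pW w) :=
    continuous_iff_continuousAt.2 fun x => (hpderiv x).continuousAt
  have hnorm : ∀ a b : ℝ, (∫ x in a..b, ‖(w x)⁻¹‖) = pW w b - pW w a := by
    intro a b
    have h1 : (∫ x in a..b, ‖(w x)⁻¹‖) = ∫ x in a..b, (w x)⁻¹ := by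
      apply intervalIntegral.integral_congr
      intro x _
      exact Real.norm_of_nonneg (inv_nonneg.2 (hw_pos x).le)
    rw [h1]
    exact (intervalIntegral.integral_interval_sub_left (hint 0 b) (hint 0 a)).symm
  have htop : Tendsto (pW w) atTop atTop := by
    by_contra h
    have h' : ¬ ∀ b : ℝ, ∃ a : ℝ, b ≤ pW w a := fun hb =>
      h (tendsto_atTop_atTop_of_monotone hmono.monotone hb)
    push_neg at h'
    obtain ⟨M, hM⟩ := h'
    apply hni_pos
    refine integrableOn_Ioi_of_intervalIntegral_norm_bounded M 0
      (fun i : ℝ => (hint 0 i).1) tendsto_id (Eventually.of_forall fun i => ?_)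
    rw [hnorm 0 i]
    have : pW w 0 = 0 := intervalIntegral.integral_same
    rw [this]
    simpa using (hM i).le
  have hbot : Tendsto (pW w) atBot atBot := by
    by_contra h
    have h' : ¬ ∀ b : ℝ, ∃ a : ℝ, pW w a ≤ b := fun hb =>
      h (tendsto_atBot_atBot_of_monotone hmono.monotone hb)
    push_neg at h'
    obtain ⟨M, hM⟩ := h'
    apply hni_neg
    have : IntegrableOn (fun ζ => (w ζ)⁻¹) (Set.Iic 0) := by
      refine integrableOn_Iic_of_intervalIntegral_norm_bounded (-M) 0
        (fun i : ℝ => (hint (-i) 0).1) tendsto_neg_atTop_atBot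
        (Eventually.of_forall fun i => ?_)
      rw [hnorm (-i) 0]
      have h0 : pW w 0 = 0 := intervalIntegral.integral_same
      rw [h0]
      linarith [(hM (-i)).le]
    exact this.mono_set Set.Iio_subset_Iic_self
  have hsurj : Function.Surjective (pW w) := hpcont.surjective htop hbot
  set q := Function.invFun (pW w) with hq
  have hri : Function.RightInverse q (pW w) := Function.rightInverse_invFun hsurj
  let e : ℝ ≃o ℝ := StrictMono.orderIsoOfSurjective (pW w) hmono hsurj
  have hq_eq : q = ⇑e.symm := by
    funext y
    apply hmono.injective
    rw [hri y]
    exact (e.apply_symm_apply y).symm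
  have hqcont : Continuous q := by rw [hq_eq]; exact OrderIso.continuous e.symm
  have hq_deriv : ∀ y, HasDerivAt q (w (q y)) y := by
    intro y
    have h := HasDerivAt.of_local_left_inverse hqcont.continuousAt
      (hpderiv (q y)) (inv_ne_zero (hwne (q y))) (Eventually.of_forall fun z => hri z)
    simpa using h
  have hxmu : ∀ ξ t : ℝ, ξ + muW w ξ t = q (pW w ξ + t) := by
    intro ξ t; simp [muW, hq]
  refine ⟨?_, ?_, ?_, ?_⟩
  · intro ξ t _
    have h1 : HasDerivAt (fun a => q (pW w a + t)) (w (q (pW w ξ + t)) * (w ξ)⁻¹) ξ := by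
      have h := (hq_deriv (pW w ξ + t)).comp ξ ((hpderiv ξ).add_const t)
      exact h
    have h2 : HasDerivAt (fun a => muW w a t)
        (w (q (pW w ξ + t)) * (w ξ)⁻¹ - 1) ξ := by
      simpa [muW, hq, Pi.sub_def] using h1.sub (hasDerivAt_id ξ)
    rw [hxmu ξ t, div_eq_mul_inv]
    exact h2
  · intro ξ t _
    have h1 : HasDerivAt (fun s => q (pW w ξ + s)) (w (q (pW w ξ + t)) * 1) t :=
      (hq_deriv (pW w ξ + t)).comp t ((hasDerivAt_id t).const_add (pW w ξ))
    have h2 : HasDerivAt (fun s => muW w ξ s) (w (q (pW w ξ + t))) t := by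
      simpa [muW, hq] using h1.sub_const ξ
    rw [hxmu ξ t]
    exact h2.hasDerivWithinAt
  · have hc : Continuous (fun p : ℝ × ℝ => w (p.1 + muW w p.1 p.2)) := by
      have : (fun p : ℝ × ℝ => p.1 + muW w p.1 p.2) =
          fun p => q (pW w p.1 + p.2) := funext fun p => hxmu p.1 p.2
      rw [show (fun p : ℝ × ℝ => w (p.1 + muW w p.1 p.2)) =
          fun p => w (q (pW w p.1 + p.2)) from funext fun p => by rw [hxmu]]
      exact hw_cont.comp (hqcont.comp ((hpcont.comp continuous_fst).add continuous_snd))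
    exact ((hc.div (hw_cont.comp continuous_fst) fun p => hwne p.1).sub
      continuous_const).continuousOn
  · have hc : Continuous (fun p : ℝ × ℝ => w (p.1 + muW w p.1 p.2)) := by
      rw [show (fun p : ℝ × ℝ => w (p.1 + muW w p.1 p.2)) =
          fun p => w (q (pW w p.1 + p.2)) from funext fun p => by rw [hxmu]]
      exact hw_cont.comp (hqcont.comp ((hpcont.comp continuous_fst).add continuous_snd))
    exact hc.continuousOn
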